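/- For all integers t ≥ 3 and ℓ ≥ 2, every {P_t, K_{2,ℓ}}-free graph G with n ≥ 2 vertices has a vertex v such that α(G[N_G[v]]) ≤ (t−1)ℓ·log₂ n. -/

import Mathlib

open SimpleGraph

/-- A set of vertices is independent (pairwise nonadjacent). -/
def IndepSet {V : Type*} (G : SimpleGraph V) (s : Set V) : Prop :=
  s.Pairwise fun a b => ¬ G.Adj a b

/-- The independence number of the subgraph of `G` induced by `S`. -/
noncomputable def indepNumOn {V : Type*} (G : SimpleGraph V) (S : Set V) : ℕ :=
  sSup {n | ∃ s : Finset V, ↑s ⊆ S ∧ IndepSet G ↑s ∧ s.card = n}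

/-- The independence number of `G`. -/
noncomputable def indepNum {V : Type*} (G : SimpleGraph V) : ℕ :=
  indepNumOn G Set.univ

/-- `G` contains no induced subgraph isomorphic to `H`. -/
def InducedFree {W V : Type*} (H : SimpleGraph W) (G : SimpleGraph V) : Prop :=
  IsEmpty (H ↪g G)

/-- The closed neighborhood of a vertex. -/
def closedNbhd {V : Type*} (G : SimpleGraph V) (v : V) : Set V :=
  insert v (G.neighborSet v)

/-- A tree-decomposition of `G` with nodes indexed by `ι`: a tree `T` together with
bags such that every vertex appears in a nonempty connected collection of bags and
every edge is contained in some bag. -/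
structure TreeDecomp {V : Type*} (G : SimpleGraph V) (ι : Type*) where
  tree : SimpleGraph ι
  isTree : tree.IsTree
  bag : ι → Set V
  subtree : ∀ v : V, (tree.induce {t | v ∈ bag t}).Connected
  covers : ∀ ⦃u v : V⦄, G.Adj u v → ∃ t, u ∈ bag t ∧ v ∈ bag t

/- ======================= Auxiliary development ======================= -/

open scoped Classical

set_option linter.unusedSectionVars false
set_option linter.unusedVariables false
set_option maxHeartbeats 1000000

section Aux

variable {V : Type} [Fintype V]

/-- Reachability inside a finite set of vertices. -/
inductive Reach (G : SimpleGraph V) (C : Finset V) (x : V) : V → Prop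
  | refl : Reach G C x x
  | step {y z : V} : Reach G C x y → G.Adj y z → z ∈ C → Reach G C x z

namespace Reach

variable {G : SimpleGraph V} {C : Finset V} {x y z : V}

lemma mem (hx : x ∈ C) (h : Reach G C x y) : y ∈ C := by
  induction h with
  | refl => exact hx
  | step _ _ hz => exact hz

lemma trans (hxy : Reach G C x y) (hyz : Reach G C y z) : Reach G C x z := by
  induction hyz with
  | refl => exact hxy
  | step h hadj hz ih => exact Reach.step ih hadj hz

lemma symm (hx : x ∈ C) (h : Reach G C x y) : Reach G C y x := by
  induction h with
  | refl => exact Reach.refl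
  | @step a b h hadj hb ih =>
      exact Reach.trans (Reach.step Reach.refl hadj.symm (h.mem hx)) ih

lemma restrict (hr : x ∈ C) (h : Reach G C x y) :
    Reach G (C.filter (fun v => Reach G C x v)) x y := by
  induction h with
  | refl => exact Reach.refl
  | @step a b h hadj hb ih =>
      exact Reach.step ih hadj (by
        simp only [Finset.mem_filter]
        exact ⟨hb, Reach.step h hadj hb⟩)

/-- Along a reach-chain from a vertex failing `P` to one satisfying `P` there is a
crossing edge. -/
lemma flip {P : V → Prop} (hx : x ∈ C) (h : Reach G C x y) (hPx : ¬ P x) (hPy : P y) :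
    ∃ a b, a ∈ C ∧ b ∈ C ∧ G.Adj a b ∧ ¬ P a ∧ P b := by
  revert hPy
  induction h with
  | refl => exact fun hPy => absurd hPy hPx
  | @step a b h hadj hb ih =>
      intro hPb
      by_cases hPa : P a
      · exact ih hPa
      · exact ⟨a, b, h.mem hx, hb, hadj, hPa, hPb⟩

end Reach

variable {G : SimpleGraph V}

lemma indepSet_mono {s u : Set V} (hsub : s ⊆ u) (h : IndepSet G u) : IndepSet G s :=
  Set.Pairwise.mono hsub h

lemma indepNumOn_le {S : Set V} {n : ℕ}
    (h : ∀ s : Finset V, ↑s ⊆ S → IndepSet G ↑s → s.card ≤ n) :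
    indepNumOn G S ≤ n := by
  apply csSup_le
  · exact ⟨0, ∅, by simp, by simp [IndepSet], rfl⟩
  · rintro k ⟨s, h1, h2, rfl⟩
    exact h s h1 h2

lemma le_indepNumOn {S : Set V} (s : Finset V) (h1 : ↑s ⊆ S) (h2 : IndepSet G ↑s) :
    s.card ≤ indepNumOn G S := by
  apply le_csSup
  · exact ⟨Fintype.card V, by rintro k ⟨u, _, _, rfl⟩; exact u.card_le_univ⟩
  · exact ⟨s, h1, h2, rfl⟩

lemma one_le_indepNumOn {S : Set V} {v : V} (hv : v ∈ S) : 1 ≤ indepNumOn G S := by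
  have := le_indepNumOn (G := G) {v} (by simpa using hv) (by simp [IndepSet])
  simpa using this

lemma mem_closedNbhd {v x : V} : x ∈ closedNbhd G v ↔ x = v ∨ G.Adj v x := by
  simp [closedNbhd, SimpleGraph.mem_neighborSet]

lemma indepNumOn_le_card {S : Set V} {A : Finset V} (hS : S ⊆ ↑A) :
    indepNumOn G S ≤ A.card := by
  apply indepNumOn_le
  intro s hs _
  exact Finset.card_le_card (by exact_mod_cast hs.trans hS)

/-- K_{2,ℓ}-freeness: independent common neighbours of a nonadjacent pair. -/
lemma card_common_le {ℓ : ℕ} (hℓ : 2 ≤ ℓ)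
    (hK : InducedFree (completeBipartiteGraph (Fin 2) (Fin ℓ)) G)
    {v d : V} (hvd : ¬ G.Adj v d) (hne : v ≠ d) (s : Finset V)
    (hind : IndepSet G ↑s) (hsub : ∀ x ∈ s, G.Adj v x ∧ G.Adj d x) :
    s.card ≤ ℓ - 1 := by
  by_contra hcard
  push_neg at hcard
  have hcard' : ℓ ≤ s.card := by omega
  obtain ⟨s', hs', hcs'⟩ := Finset.exists_subset_card_eq hcard'
  have e : ↥s' ≃ Fin ℓ := s'.equivFinOfCardEq hcs'
  set g : Fin ℓ → V := fun i => ↑(e.symm i) with hg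
  have hgs : ∀ i, g i ∈ s := fun i => hs' (e.symm i).2
  have hginj : Function.Injective g := fun i j hij => by
    have := Subtype.ext (p := fun x => x ∈ s') hij
    simpa using congrArg e this
  have hgadj : ∀ i, G.Adj v (g i) ∧ G.Adj d (g i) := fun i => hsub _ (hgs i)
  set φ : Fin 2 ⊕ Fin ℓ → V := Sum.elim (fun i => if i = 0 then v else d) g with hφ
  have hvg : ∀ i, v ≠ g i := fun i => (hgadj i).1.ne
  have hdg : ∀ i, d ≠ g i := fun i => (hgadj i).2.ne
  have hinj : Function.Injective φ := by
    rintro (i | i) (j | j) hij <;> simp only [hφ, Sum.elim_inl, Sum.elim_inr] at hij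
    · congr 1
      fin_cases i <;> fin_cases j <;> simp_all
    · exfalso
      by_cases h0 : i = 0
      · exact hvg j (by simpa [h0] using hij)
      · exact hdg j (by simpa [if_neg h0] using hij)
    · exfalso
      by_cases h0 : j = 0
      · exact hvg i (by simpa [h0] using hij.symm)
      · exact hdg i (by simpa [if_neg h0] using hij.symm)
    · simpa using hginj hij
  have hrel : ∀ a b, G.Adj (φ a) (φ b) ↔ (completeBipartiteGraph (Fin 2) (Fin ℓ)).Adj a b := by
    rintro (i | i) (j | j)
    · apply iff_of_false
      · intro hadj
        simp only [hφ, Sum.elim_inl] at hadj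
        fin_cases i <;> fin_cases j <;> simp at hadj <;>
          first | exact hvd hadj | exact hvd hadj.symm | exact G.irrefl hadj | exact hadj.elim
      · simp
    · apply iff_of_true
      · simp only [hφ, Sum.elim_inl, Sum.elim_inr]
        by_cases hi : i = 0
        · rw [hi, if_pos rfl]; exact (hgadj j).1
        · rw [if_neg hi]; exact (hgadj j).2
      · simp
    · apply iff_of_true
      · simp only [hφ, Sum.elim_inl, Sum.elim_inr]
        by_cases hj : j = 0
        · rw [hj, if_pos rfl]; exact (hgadj i).1.symm
        · rw [if_neg hj]; exact (hgadj i).2.symm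
      · simp
    · apply iff_of_false
      · intro hadj
        simp only [hφ, Sum.elim_inr] at hadj
        rcases eq_or_ne i j with rfl | hij
        · exact G.irrefl hadj
        · exact hind (Finset.mem_coe.mpr (hgs i)) (Finset.mem_coe.mpr (hgs j))
            (fun h => hij (hginj h)) hadj
      · simp
  exact hK.false ⟨⟨φ, hinj⟩, fun {a b} => hrel a b⟩

/-- An induced path with `t` vertices contradicts `P_t`-freeness. -/
lemma no_long_path {t : ℕ} (hP : InducedFree (pathGraph t) G) {m : ℕ} (hm : t ≤ m + 1)
    (w : ℕ → V)
    (hadj : ∀ i, i < m → G.Adj (w i) (w (i + 1)))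
    (hfar : ∀ i j, i + 2 ≤ j → j ≤ m → ¬ G.Adj (w i) (w j) ∧ w i ≠ w j) : False := by
  set f : Fin t → V := fun i => w i with hf
  have key : ∀ i j : Fin t, (i : ℕ) < j → (G.Adj (f i) (f j) ↔ (j : ℕ) = i + 1) := by
    intro i j hij
    rcases eq_or_lt_of_le (Nat.succ_le_of_lt hij) with h1 | h2
    · constructor
      · intro _; omega
      · intro _
        have : (i : ℕ) < m := by omega
        have hj2 : (j : ℕ) = (i : ℕ) + 1 := by omega
        show G.Adj (w i) (w j)
        rw [hj2]
        exact hadj i this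
    · have hfar' := hfar i j (by omega) (by omega)
      constructor
      · intro hadj'; exact absurd hadj' hfar'.1
      · intro h; omega
  have hinj : Function.Injective f := by
    intro i j hij
    rcases lt_trichotomy (i : ℕ) (j : ℕ) with h | h | h
    · rcases eq_or_lt_of_le (Nat.succ_le_of_lt h) with h1 | h2
      · exact absurd hij (((key i j h).mpr h1.symm).ne)
      · exact absurd hij (hfar i j (by omega) (by omega)).2
    · exact Fin.ext h
    · rcases eq_or_lt_of_le (Nat.succ_le_of_lt h) with h1 | h2
      · exact absurd hij.symm (((key j i h).mpr h1.symm).ne)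
      · exact absurd hij.symm (hfar j i (by omega) (by omega)).2
  apply hP.false
  refine ⟨⟨f, hinj⟩, ?_⟩
  intro a b
  simp only [Function.Embedding.coeFn_mk, pathGraph_adj]
  rcases lt_trichotomy (a : ℕ) (b : ℕ) with h | h | h
  · rw [key a b h]
    constructor
    · intro h1; left; omega
    · intro h1; omega
  · constructor
    · intro hadj'
      exact absurd (Fin.ext h : a = b) (by rintro rfl; exact G.irrefl hadj')
    · intro h1; omega
  · rw [SimpleGraph.adj_comm, key b a h]
    constructor
    · intro h1; right; omega
    · intro h1; omega

/-- The outcome of the Gyárfás-path argument: either a dominating vertex, or a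
"half-sized" subset `B` whose outside neighborhoods are controlled by at most `t-1`
vertices, each nonadjacent to all of `B`. -/
def CoreGoal (G : SimpleGraph V) (t : ℕ) (A : Finset V) : Prop :=
  (∃ a ∈ A, ∀ x ∈ A, x = a ∨ G.Adj a x) ∨
  (∃ B D : Finset V, B ⊆ A ∧ B.Nonempty ∧ 2 * B.card ≤ A.card ∧ D.card ≤ t - 1 ∧
    (∀ v ∈ B, ∀ d ∈ D, ¬ G.Adj v d ∧ v ≠ d) ∧
    (∀ v ∈ B, ∀ x ∈ A, G.Adj v x → x ∈ B ∨ ∃ d ∈ D, G.Adj d x))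

lemma core {t : ℕ} (ht : 3 ≤ t) (hP : InducedFree (pathGraph t) G) (A : Finset V) :
    ∀ N : ℕ, ∀ C : Finset V, C.card ≤ N → ∀ m : ℕ, ∀ w : ℕ → V,
    (∀ i, i ≤ m → w i ∈ A) →
    (∀ i, i < m → G.Adj (w i) (w (i + 1))) →
    (∀ i j, i + 2 ≤ j → j ≤ m → ¬ G.Adj (w i) (w j) ∧ w i ≠ w j) →
    C ⊆ A →
    (∀ v ∈ C, ∀ i, i < m → ¬ G.Adj (w i) v ∧ w i ≠ v) →
    w m ∉ C →
    (∃ c ∈ C, G.Adj (w m) c) →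
    (∀ v ∈ C, ∀ x ∈ A, G.Adj v x → x ∈ C ∨ x = w m ∨ ∃ i ≤ m, G.Adj (w i) x) →
    (∃ r ∈ C, ∀ y ∈ C, Reach G C r y) →
    A.card < 2 * C.card →
    CoreGoal G t A := by
  intro N
  induction N with
  | zero =>
      intro C hC m w _ _ _ _ _ _ hnbr _ _ _
      obtain ⟨c, hcC, _⟩ := hnbr
      simp [Finset.card_eq_zero.mp (Nat.le_zero.mp hC)] at hcC
  | succ N ih =>
      intro C hCN m w hwA hadj hfar hCA hanti hlast hnbr hclos hroot hbig
      set W : Finset V := C.filter (fun v => ¬ G.Adj (w m) v) with hWdef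
      have hWC : W ⊆ C := Finset.filter_subset _ _
      by_cases hW : W = ∅
      · -- `w m` dominates `C`
        have hCd : ∀ v ∈ C, G.Adj (w m) v := by
          intro v hv
          by_contra h
          exact Finset.eq_empty_iff_forall_notMem.mp hW v (Finset.mem_filter.mpr ⟨hv, h⟩)
        set B : Finset V := A.filter (fun x => ¬ G.Adj (w m) x ∧ x ≠ w m) with hBdef
        by_cases hB : B = ∅
        · left
          refine ⟨w m, hwA m le_rfl, ?_⟩
          intro x hx
          by_contra hcon
          push_neg at hcon
          exact Finset.eq_empty_iff_forall_notMem.mp hB x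
            (Finset.mem_filter.mpr ⟨hx, fun h => hcon.2 h, hcon.1⟩)
        · right
          have hBne : B.Nonempty := Finset.nonempty_of_ne_empty hB
          have hBA : B ⊆ A := Finset.filter_subset _ _
          have hIC : insert (w m) C ⊆ A := by
            rw [Finset.insert_subset_iff]
            exact ⟨hwA m le_rfl, hCA⟩
          have hdisj : Disjoint B (insert (w m) C) := by
            rw [Finset.disjoint_left]
            intro x hxB hxI
            obtain ⟨_, hna, hne⟩ := Finset.mem_filter.mp hxB
            rcases Finset.mem_insert.mp hxI with rfl | hxC
            · exact hne rfl
            · exact hna (hCd x hxC)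
          have hcard1 : B.card + (C.card + 1) ≤ A.card := by
            have h1 := Finset.card_le_card (Finset.union_subset hBA hIC)
            rw [Finset.card_union_of_disjoint hdisj,
              Finset.card_insert_of_notMem hlast] at h1
            omega
          refine ⟨B, {w m}, hBA, hBne, by omega, by simp; omega, ?_, ?_⟩
          · intro v hv d hd
            rw [Finset.mem_singleton] at hd
            subst hd
            obtain ⟨_, hna, hne⟩ := Finset.mem_filter.mp hv
            exact ⟨fun h => hna h.symm, hne⟩
          · intro v hv x hx hvx
            by_cases hxB : x ∈ B
            · exact Or.inl hxB
            · right
              refine ⟨w m, Finset.mem_singleton_self _, ?_⟩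
              have : ¬ (¬ G.Adj (w m) x ∧ x ≠ w m) := fun h =>
                hxB (Finset.mem_filter.mpr ⟨hx, h⟩)
              push_neg at this
              by_cases hadj' : G.Adj (w m) x
              · exact hadj'
              · exfalso
                obtain ⟨_, hna, _⟩ := Finset.mem_filter.mp hv
                exact hna ((this hadj') ▸ hvx).symm
      · -- there is a vertex outside `N[w m]` in `C`
        obtain ⟨w₀, hw₀W⟩ := Finset.nonempty_of_ne_empty hW
        set C' : Finset V := W.filter (fun y => Reach G W w₀ y) with hC'def
        have hw₀C' : w₀ ∈ C' := Finset.mem_filter.mpr ⟨hw₀W, Reach.refl⟩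
        have hC'W : C' ⊆ W := Finset.filter_subset _ _
        have hC'A : C' ⊆ A := (hC'W.trans hWC).trans hCA
        have hC'closed : ∀ y ∈ C', ∀ z ∈ W, G.Adj y z → z ∈ C' := by
          intro y hy z hz hadj'
          exact Finset.mem_filter.mpr ⟨hz, Reach.step (Finset.mem_filter.mp hy).2 hadj' hz⟩
        by_cases hsz : 2 * C'.card ≤ A.card
        · -- small component: exit with `B := C'`
          right
          have hmt : m + 1 ≤ t - 1 := by
            by_contra hcon
            exact no_long_path hP (by omega) w hadj hfar
          refine ⟨C', (Finset.range (m + 1)).image w, hC'A, ⟨w₀, hw₀C'⟩, hsz, ?_, ?_, ?_⟩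
          · calc ((Finset.range (m + 1)).image w).card ≤ (Finset.range (m + 1)).card :=
                Finset.card_image_le
              _ = m + 1 := Finset.card_range _
              _ ≤ t - 1 := hmt
          · intro v hv d hd
            obtain ⟨i, hi, rfl⟩ := Finset.mem_image.mp hd
            rw [Finset.mem_range] at hi
            have hvC : v ∈ C := hWC (hC'W hv)
            rcases Nat.lt_or_ge i m with him | him
            · obtain ⟨h1, h2⟩ := hanti v hvC i him
              exact ⟨fun h => h1 h.symm, fun h => h2 h.symm⟩
            · have : i = m := by omega
              subst this
              obtain ⟨_, hna⟩ := Finset.mem_filter.mp (hC'W hv)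
              exact ⟨fun h => hna h.symm, fun h => hlast (h ▸ hvC)⟩
          · intro v hv x hx hvx
            rcases hclos v (hWC (hC'W hv)) x hx hvx with hxC | hxu | ⟨i, him, hia⟩
            · by_cases hux : G.Adj (w m) x
              · exact Or.inr ⟨w m, Finset.mem_image.mpr ⟨m, by simp, rfl⟩, hux⟩
              · exact Or.inl (hC'closed v hv x (Finset.mem_filter.mpr ⟨hxC, hux⟩) hvx)
            · exfalso
              obtain ⟨_, hna⟩ := Finset.mem_filter.mp (hC'W hv)
              exact hna (hxu ▸ hvx).symm
            · exact Or.inr ⟨w i, Finset.mem_image.mpr ⟨i, by simp; omega, rfl⟩, hia⟩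
        · -- large component: extend the path
          push_neg at hsz
          obtain ⟨c, hcC, hc⟩ := hnbr
          have hcW : c ∉ W := fun h => (Finset.mem_filter.mp h).2 hc
          have hcC' : c ∉ C' := fun h => hcW (hC'W h)
          obtain ⟨r, hrC, hr⟩ := hroot
          have hreach : Reach G C c w₀ :=
            (Reach.symm hrC (hr c hcC)).trans (hr w₀ (hWC hw₀W))
          obtain ⟨x, y, hxC, hyC, hxy, hxnC', hyC'⟩ :=
            Reach.flip (P := fun z => z ∈ C') hcC hreach hcC' hw₀C'
          have hxW : x ∉ W := by
            intro hxW'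
            exact hxnC' (hC'closed y hyC' x hxW' hxy.symm)
          have hux : G.Adj (w m) x := by
            by_contra h
            exact hxW (Finset.mem_filter.mpr ⟨hxC, h⟩)
          set w' : ℕ → V := Function.update w (m + 1) x with hw'def
          have hw'eq : ∀ i, i ≤ m → w' i = w i := fun i hi =>
            Function.update_of_ne (by omega) _ _
          have hw'last : w' (m + 1) = x := Function.update_self _ _ _
          have hC'N : C'.card ≤ N := by
            have h1 : W ⊆ C.erase c := by
              intro z hz
              exact Finset.mem_erase.mpr ⟨fun h => hcW (h ▸ hz), hWC hz⟩
            have h2 := Finset.card_le_card (hC'W.trans h1)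
            rw [Finset.card_erase_of_mem hcC] at h2
            have := Finset.card_pos.mpr ⟨c, hcC⟩
            omega
          apply ih C' hC'N (m + 1) w'
          · intro i hi
            rcases Nat.lt_or_ge i (m + 1) with him | him
            · rw [hw'eq i (by omega)]
              exact hwA i (by omega)
            · have : i = m + 1 := by omega
              rw [this, hw'last]
              exact hCA hxC
          · intro i hi
            rcases Nat.lt_or_ge i m with him | him
            · rw [hw'eq i (by omega), hw'eq (i + 1) (by omega)]
              exact hadj i him
            · have : i = m := by omega
              subst this
              rw [hw'eq i le_rfl, hw'last]
              exact hux
          · intro i j hij hjm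
            rcases Nat.lt_or_ge j (m + 1) with hjm' | hjm'
            · rw [hw'eq i (by omega), hw'eq j (by omega)]
              exact hfar i j hij (by omega)
            · have : j = m + 1 := by omega
              subst this
              rw [hw'eq i (by omega), hw'last]
              exact hanti x hxC i (by omega)
          · exact hC'A
          · intro v hv i hi
            rcases Nat.lt_or_ge i m with him | him
            · rw [hw'eq i (by omega)]
              exact hanti v (hWC (hC'W hv)) i him
            · have : i = m := by omega
              subst this
              rw [hw'eq i le_rfl]
              obtain ⟨hvC, hna⟩ := Finset.mem_filter.mp (hC'W hv)
              exact ⟨hna, fun h => hlast (h ▸ hWC (hC'W hv))⟩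
          · rw [hw'last]
            exact hxnC'
          · exact ⟨y, hyC', by rw [hw'last]; exact hxy⟩
          · intro v hv z hz hvz
            rcases hclos v (hWC (hC'W hv)) z hz hvz with hzC | hzu | ⟨i, him, hia⟩
            · by_cases huz : G.Adj (w m) z
              · exact Or.inr (Or.inr ⟨m, by omega, by rw [hw'eq m le_rfl]; exact huz⟩)
              · exact Or.inl (hC'closed v hv z (Finset.mem_filter.mpr ⟨hzC, huz⟩) hvz)
            · exfalso
              obtain ⟨_, hna⟩ := Finset.mem_filter.mp (hC'W hv)
              exact hna (hzu ▸ hvz).symm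
            · exact Or.inr (Or.inr ⟨i, by omega, by rw [hw'eq i him]; exact hia⟩)
          · refine ⟨w₀, hw₀C', ?_⟩
            intro z hz
            exact Reach.restrict hw₀W (Finset.mem_filter.mp hz).2
          · exact hsz

/-- Cost of passing from `A` to `B`: the closed neighborhood independence number grows by at
most `|D| * (ℓ-1)`. -/
lemma cost_lemma {ℓ : ℕ} (hℓ : 2 ≤ ℓ)
    (hK : InducedFree (completeBipartiteGraph (Fin 2) (Fin ℓ)) G)
    {A B D : Finset V} {v : V} (hvB : v ∈ B)
    (hanti : ∀ d ∈ D, ¬ G.Adj v d ∧ v ≠ d)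
    (hclos : ∀ x ∈ A, G.Adj v x → x ∈ B ∨ ∃ d ∈ D, G.Adj d x) :
    indepNumOn G (closedNbhd G v ∩ ↑A) ≤
      indepNumOn G (closedNbhd G v ∩ ↑B) + D.card * (ℓ - 1) := by
  apply indepNumOn_le
  intro s hs hind
  have hmem : ∀ x ∈ s, x ∈ closedNbhd G v ∧ x ∈ A := by
    intro x hx
    have := hs (Finset.mem_coe.mpr hx)
    exact ⟨this.1, Finset.mem_coe.mp this.2⟩
  have hsplit := Finset.card_filter_add_card_filter_not
    (s := s) (p := fun x => x ∈ B)
  have h1 : (s.filter (fun x => x ∈ B)).card ≤ indepNumOn G (closedNbhd G v ∩ ↑B) := by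
    apply le_indepNumOn
    · intro x hx
      simp only [Finset.coe_filter, Set.mem_setOf_eq] at hx
      exact ⟨(hmem x hx.1).1, Finset.mem_coe.mpr hx.2⟩
    · exact indepSet_mono (fun x hx => by
        simp only [Finset.coe_filter, Set.mem_setOf_eq] at hx
        exact Finset.mem_coe.mpr hx.1) hind
  have h2 : (s.filter (fun x => ¬ x ∈ B)) ⊆ D.biUnion (fun d => s.filter (fun x => G.Adj d x)) := by
    intro x hx
    simp only [Finset.mem_filter] at hx
    obtain ⟨hxs, hxB⟩ := hx
    obtain ⟨hxc, hxA⟩ := hmem x hxs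
    rcases mem_closedNbhd.mp hxc with rfl | hadj
    · exact absurd hvB hxB
    · rcases hclos x hxA hadj with hB | ⟨d, hd, hdx⟩
      · exact absurd hB hxB
      · exact Finset.mem_biUnion.mpr ⟨d, hd, Finset.mem_filter.mpr ⟨hxs, hdx⟩⟩
  have heach : ∀ d ∈ D, (s.filter (fun x => G.Adj d x)).card ≤ ℓ - 1 := by
    intro d hd
    refine card_common_le hℓ hK (hanti d hd).1 (hanti d hd).2 _ ?_ ?_
    · exact indepSet_mono (fun a ha => by
        simp only [Finset.coe_filter, Set.mem_setOf_eq] at ha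
        exact Finset.mem_coe.mpr ha.1) hind
    · intro x hx
      simp only [Finset.mem_filter] at hx
      obtain ⟨hxs, hdx⟩ := hx
      have hxc := (hmem x hxs).1
      rcases mem_closedNbhd.mp hxc with rfl | hadj
      · exact absurd hdx.symm (hanti d hd).1
      · exact ⟨hadj, hdx⟩
  have h3 : (s.filter (fun x => ¬ x ∈ B)).card ≤ D.card * (ℓ - 1) := by
    have hb1 : (s.filter (fun x => ¬ x ∈ B)).card
        ≤ (D.biUnion (fun d => s.filter (fun x => G.Adj d x))).card := Finset.card_le_card h2
    have hb2 : (D.biUnion (fun d => s.filter (fun x => G.Adj d x))).card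
        ≤ ∑ d ∈ D, (s.filter (fun x => G.Adj d x)).card := Finset.card_biUnion_le
    have hsum : ∑ d ∈ D, (s.filter (fun x => G.Adj d x)).card ≤ D.card * (ℓ - 1) := by
      have := Finset.sum_le_sum heach
      calc ∑ d ∈ D, (s.filter (fun x => G.Adj d x)).card ≤ ∑ _d ∈ D, (ℓ - 1) := this
        _ = D.card * (ℓ - 1) := by rw [Finset.sum_const, smul_eq_mul]
    omega
  omega

/-- If `a` is adjacent to every other vertex of `A`, removing it does not decrease the
relevant independence numbers. -/
lemma cone_lemma {A : Finset V} {a v : V} (hv : v ∈ A) (hva : v ≠ a)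
    (hdom : ∀ x ∈ A, x ≠ a → G.Adj a x) :
    indepNumOn G (closedNbhd G v ∩ ↑A) ≤ indepNumOn G (closedNbhd G v ∩ ↑(A.erase a)) := by
  apply indepNumOn_le
  intro s hs hind
  by_cases ha : a ∈ s
  · have hone : s = {a} := by
      apply Finset.eq_singleton_iff_unique_mem.mpr
      refine ⟨ha, fun x hx => ?_⟩
      by_contra hxa
      have hxA : x ∈ A := Finset.mem_coe.mp (hs (Finset.mem_coe.mpr hx)).2
      exact hind (Finset.mem_coe.mpr ha) (Finset.mem_coe.mpr hx)
        (Ne.symm hxa) (hdom x hxA hxa)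
    rw [hone, Finset.card_singleton]
    apply one_le_indepNumOn (v := v)
    exact ⟨mem_closedNbhd.mpr (Or.inl rfl), Finset.mem_coe.mpr (Finset.mem_erase.mpr ⟨hva, hv⟩)⟩
  · apply le_indepNumOn s _ hind
    intro x hx
    have h := hs hx
    refine ⟨h.1, Finset.mem_coe.mpr (Finset.mem_erase.mpr ⟨?_, Finset.mem_coe.mp h.2⟩)⟩
    rintro rfl
    exact ha (Finset.mem_coe.mp hx)

/-- Arithmetic: the halving step. -/
lemma arith_lemma {t ℓ : ℕ} (ht : 3 ≤ t) (hℓ : 2 ≤ ℓ) {b a : ℕ}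
    (h2b : 2 * b ≤ a) (ha : 5 ≤ a) :
    ((t : ℝ) - 1) * ℓ * Real.logb 2 ((max b 2 : ℕ) : ℝ) + ((t : ℝ) - 1) * ((ℓ : ℝ) - 1) ≤
      ((t : ℝ) - 1) * ℓ * Real.logb 2 a := by
  have ht1 : (2 : ℝ) ≤ (t : ℝ) - 1 := by
    have : (3 : ℝ) ≤ (t : ℝ) := by exact_mod_cast ht
    linarith
  have hℓ1 : (2 : ℝ) ≤ (ℓ : ℝ) := by exact_mod_cast hℓ
  rw [Nat.cast_max, Nat.cast_ofNat]
  have hmax : max (b : ℝ) 2 ≤ (a : ℝ) / 2 := by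
    have h1 : (b : ℝ) ≤ (a : ℝ) / 2 := by
      have : (2 : ℝ) * b ≤ a := by exact_mod_cast h2b
      linarith
    have h2 : (2 : ℝ) ≤ (a : ℝ) / 2 := by
      have : (5 : ℝ) ≤ (a : ℝ) := by exact_mod_cast ha
      linarith
    exact max_le h1 h2
  have hpos : (0 : ℝ) < max (b : ℝ) 2 := lt_max_of_lt_right two_pos
  have hlog : Real.logb 2 (max (b : ℝ) 2) ≤ Real.logb 2 a - 1 := by
    have h1 : Real.logb 2 (max (b : ℝ) 2) ≤ Real.logb 2 ((a : ℝ) / 2) :=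
      Real.logb_le_logb_of_le one_lt_two hpos hmax
    have h2 : Real.logb 2 ((a : ℝ) / 2) = Real.logb 2 a - 1 := by
      rw [Real.logb_div (by positivity) (by norm_num)]
      rw [Real.logb_self_eq_one (by norm_num)]
    linarith
  have hfac : (0 : ℝ) ≤ ((t : ℝ) - 1) * ℓ := by nlinarith
  have h4 : ((t : ℝ) - 1) * ((ℓ : ℝ) - 1) ≤ ((t : ℝ) - 1) * (ℓ : ℝ) := by nlinarith
  have h5 := mul_le_mul_of_nonneg_left hlog hfac
  have h6 : ((t : ℝ) - 1) * ℓ * (Real.logb 2 a - 1) =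
      ((t : ℝ) - 1) * ℓ * Real.logb 2 a - ((t : ℝ) - 1) * ℓ := by ring
  linarith [h5, h4, h6]

lemma f_mono {t ℓ : ℕ} (ht : 3 ≤ t) (hℓ : 2 ≤ ℓ) {b a : ℕ} (h : b ≤ a) :
    ((t : ℝ) - 1) * ℓ * Real.logb 2 ((max b 2 : ℕ) : ℝ) ≤
      ((t : ℝ) - 1) * ℓ * Real.logb 2 ((max a 2 : ℕ) : ℝ) := by
  have ht1 : (1 : ℝ) ≤ (t : ℝ) := by exact_mod_cast (by omega : 1 ≤ t)
  have hfac : (0 : ℝ) ≤ ((t : ℝ) - 1) * ℓ := by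
    have : (0 : ℝ) ≤ (ℓ : ℝ) := Nat.cast_nonneg _
    nlinarith
  apply mul_le_mul_of_nonneg_left _ hfac
  apply Real.logb_le_logb_of_le one_lt_two
  · exact_mod_cast Nat.lt_of_lt_of_le (by norm_num) (le_max_right b 2)
  · exact_mod_cast max_le_max h (le_refl 2)

lemma main_lemma {t ℓ : ℕ} (ht : 3 ≤ t) (hℓ : 2 ≤ ℓ)
    (hP : InducedFree (pathGraph t) G) (hK : InducedFree (completeBipartiteGraph (Fin 2) (Fin ℓ)) G) :
    ∀ n : ℕ, ∀ A : Finset V, A.card ≤ n → A.Nonempty →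
    ∃ v ∈ A, (indepNumOn G (closedNbhd G v ∩ ↑A) : ℝ) ≤
      ((t : ℝ) - 1) * ℓ * Real.logb 2 ((max A.card 2 : ℕ) : ℝ) := by
  intro n
  induction n with
  | zero =>
      intro A hA hAne
      obtain ⟨a, ha⟩ := hAne
      simp [Finset.card_eq_zero.mp (Nat.le_zero.mp hA)] at ha
  | succ n IH =>
      intro A hA hAne
      have hlog1 : (1 : ℝ) ≤ Real.logb 2 ((max A.card 2 : ℕ) : ℝ) := by
        have h2 : (2 : ℝ) ≤ ((max A.card 2 : ℕ) : ℝ) := by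
          exact_mod_cast le_max_right A.card 2
        calc (1 : ℝ) = Real.logb 2 2 := (Real.logb_self_eq_one one_lt_two).symm
          _ ≤ _ := Real.logb_le_logb_of_le one_lt_two (by norm_num) h2
      have hfac4 : (4 : ℝ) ≤ ((t : ℝ) - 1) * ℓ := by
        have h1 : (3 : ℝ) ≤ (t : ℝ) := by exact_mod_cast ht
        have h2 : (2 : ℝ) ≤ (ℓ : ℝ) := by exact_mod_cast hℓ
        nlinarith
      by_cases htriv : A.card ≤ 4
      · obtain ⟨a, ha⟩ := hAne
        refine ⟨a, ha, ?_⟩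
        have hle : indepNumOn G (closedNbhd G a ∩ ↑A) ≤ A.card :=
          indepNumOn_le_card Set.inter_subset_right
        have h4 : ((indepNumOn G (closedNbhd G a ∩ ↑A) : ℕ) : ℝ) ≤ 4 := by
          exact_mod_cast hle.trans htriv
        nlinarith
      · push_neg at htriv
        have h5 : 5 ≤ A.card := htriv
        obtain ⟨a, haA⟩ := hAne
        set R : Finset V := A.filter (fun v => Reach G A a v) with hRdef
        have haR : a ∈ R := Finset.mem_filter.mpr ⟨haA, Reach.refl⟩
        have hRsub : R ⊆ A := Finset.filter_subset _ _
        by_cases hRA : R = A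
        · -- connected case
          have hreachA : ∀ y ∈ A, Reach G A a y := by
            intro y hy
            rw [← hRA] at hy
            exact (Finset.mem_filter.mp hy).2
          have hgoal : CoreGoal G t A := by
            set W : Finset V := A.filter (fun v => ¬ G.Adj a v ∧ v ≠ a) with hWdef
            by_cases hWe : W = ∅
            · left
              refine ⟨a, haA, ?_⟩
              intro x hx
              by_contra hcon
              push_neg at hcon
              exact Finset.eq_empty_iff_forall_notMem.mp hWe x
                (Finset.mem_filter.mpr ⟨hx, fun h => hcon.2 h, hcon.1⟩)
            · obtain ⟨w₀, hw₀W⟩ := Finset.nonempty_of_ne_empty hWe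
              set C₁ : Finset V := W.filter (fun y => Reach G W w₀ y) with hC₁def
              have hw₀C₁ : w₀ ∈ C₁ := Finset.mem_filter.mpr ⟨hw₀W, Reach.refl⟩
              have hC₁W : C₁ ⊆ W := Finset.filter_subset _ _
              have hWA : W ⊆ A := Finset.filter_subset _ _
              have hC₁closed : ∀ y ∈ C₁, ∀ z ∈ W, G.Adj y z → z ∈ C₁ := by
                intro y hy z hz hadj'
                exact Finset.mem_filter.mpr
                  ⟨hz, Reach.step (Finset.mem_filter.mp hy).2 hadj' hz⟩
              by_cases hsz : 2 * C₁.card ≤ A.card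
              · right
                refine ⟨C₁, {a}, hC₁W.trans hWA, ⟨w₀, hw₀C₁⟩, hsz, by simp; omega, ?_, ?_⟩
                · intro v hv d hd
                  rw [Finset.mem_singleton] at hd
                  subst hd
                  obtain ⟨_, hna, hne⟩ := Finset.mem_filter.mp (hC₁W hv)
                  exact ⟨fun h => hna h.symm, hne⟩
                · intro v hv x hx hvx
                  by_cases hxW : x ∈ W
                  · exact Or.inl (hC₁closed v hv x hxW hvx)
                  · right
                    refine ⟨a, Finset.mem_singleton_self _, ?_⟩
                    have hnot : ¬ (¬ G.Adj a x ∧ x ≠ a) := fun h =>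
                      hxW (Finset.mem_filter.mpr ⟨hx, h⟩)
                    push_neg at hnot
                    by_cases hadj0 : G.Adj a x
                    · exact hadj0
                    · exfalso
                      obtain ⟨_, hna, _⟩ := Finset.mem_filter.mp (hC₁W hv)
                      exact hna ((hnot hadj0) ▸ hvx).symm
              · push_neg at hsz
                have haC₁ : a ∉ C₁ := fun h =>
                  (Finset.mem_filter.mp (hC₁W h)).2.2 rfl
                have hreach : Reach G A a w₀ := hreachA w₀ (hWA hw₀W)
                obtain ⟨x, y, hxA, hyA, hxy, hxnC₁, hyC₁⟩ :=
                  Reach.flip (P := fun z => z ∈ C₁) haA hreach haC₁ hw₀C₁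
                have hxW : x ∉ W := by
                  intro hxW'
                  exact hxnC₁ (hC₁closed y hyC₁ x hxW' hxy.symm)
                have hnot : ¬ (¬ G.Adj a x ∧ x ≠ a) := fun h =>
                  hxW (Finset.mem_filter.mpr ⟨hxA, h⟩)
                push_neg at hnot
                have hax : G.Adj a x := by
                  by_cases hadj0 : G.Adj a x
                  · exact hadj0
                  · exfalso
                    obtain ⟨_, hna, _⟩ := Finset.mem_filter.mp (hC₁W hyC₁)
                    exact hna ((hnot hadj0) ▸ hxy)
                set w : ℕ → V := fun i => if i = 0 then a else x with hwdef
                have hw0 : w 0 = a := by simp [hwdef]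
                have hw1 : ∀ i : ℕ, i ≠ 0 → w i = x := by
                  intro i hi
                  simp [hwdef, hi]
                apply core ht hP A C₁.card C₁ le_rfl 1 w
                · intro i hi
                  rcases Nat.eq_zero_or_pos i with rfl | hip
                  · rw [hw0]; exact haA
                  · rw [hw1 i (by omega)]; exact hxA
                · intro i hi
                  have : i = 0 := by omega
                  subst this
                  rw [hw0, hw1 1 (by omega)]
                  exact hax
                · intro i j hij hj
                  omega
                · exact hC₁W.trans hWA
                · intro v hv i hi
                  have : i = 0 := by omega
                  subst this
                  rw [hw0]
                  obtain ⟨_, hna, hne⟩ := Finset.mem_filter.mp (hC₁W hv)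
                  exact ⟨hna, fun h => hne h.symm⟩
                · rw [hw1 1 (by omega)]
                  exact hxnC₁
                · exact ⟨y, hyC₁, by rw [hw1 1 (by omega)]; exact hxy⟩
                · intro v hv z hz hvz
                  by_cases hzW : z ∈ W
                  · exact Or.inl (hC₁closed v hv z hzW hvz)
                  · have hnot' : ¬ (¬ G.Adj a z ∧ z ≠ a) := fun h =>
                      hzW (Finset.mem_filter.mpr ⟨hz, h⟩)
                    push_neg at hnot'
                    by_cases hadj0 : G.Adj a z
                    · exact Or.inr (Or.inr ⟨0, by omega, by rw [hw0]; exact hadj0⟩)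
                    · exfalso
                      obtain ⟨_, hna, _⟩ := Finset.mem_filter.mp (hC₁W hv)
                      exact hna ((hnot' hadj0) ▸ hvz).symm
                · refine ⟨w₀, hw₀C₁, ?_⟩
                  intro z hz
                  exact Reach.restrict hw₀W (Finset.mem_filter.mp hz).2
                · exact hsz
          -- handle the two outcomes
          rcases hgoal with ⟨a', ha'A, hdom⟩ | ⟨B, D, hBA, hBne, hBsz, hDcard, hBanti, hBclos⟩
          · -- dominating vertex: cone recursion
            have hcardE : (A.erase a').card = A.card - 1 := Finset.card_erase_of_mem ha'A
            have hEne : (A.erase a').Nonempty := Finset.card_pos.mp (by omega)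
            obtain ⟨v, hvE, hv⟩ := IH (A.erase a') (by omega) hEne
            refine ⟨v, Finset.mem_of_mem_erase hvE, ?_⟩
            have hcone := cone_lemma (G := G) (Finset.mem_of_mem_erase hvE)
              (Finset.ne_of_mem_erase hvE)
              (fun x hx hxne => (hdom x hx).resolve_left hxne)
            calc ((indepNumOn G (closedNbhd G v ∩ ↑A) : ℕ) : ℝ)
                ≤ ((indepNumOn G (closedNbhd G v ∩ ↑(A.erase a')) : ℕ) : ℝ) := by
                  exact_mod_cast hcone
              _ ≤ ((t : ℝ) - 1) * ℓ * Real.logb 2 ((max (A.erase a').card 2 : ℕ) : ℝ) := hv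
              _ ≤ _ := f_mono ht hℓ (by omega)
          · -- half-sized recursion
            have hBn : B.card ≤ n := by omega
            obtain ⟨v, hvB, hv⟩ := IH B hBn hBne
            refine ⟨v, hBA hvB, ?_⟩
            have hcost := cost_lemma hℓ hK hvB (fun d hd => hBanti v hvB d hd)
              (fun x hx hadj' => hBclos v hvB x hx hadj')
            have hcast : ((indepNumOn G (closedNbhd G v ∩ ↑A) : ℕ) : ℝ) ≤
                ((indepNumOn G (closedNbhd G v ∩ ↑B) : ℕ) : ℝ) +
                  ((t : ℝ) - 1) * ((ℓ : ℝ) - 1) := by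
              have h1 : ((D.card * (ℓ - 1) : ℕ) : ℝ) ≤ ((t : ℝ) - 1) * ((ℓ : ℝ) - 1) := by
                have hD : D.card * (ℓ - 1) ≤ (t - 1) * (ℓ - 1) :=
                  Nat.mul_le_mul_right _ hDcard
                calc ((D.card * (ℓ - 1) : ℕ) : ℝ) ≤ (((t - 1) * (ℓ - 1) : ℕ) : ℝ) := by
                      exact_mod_cast hD
                  _ = ((t : ℝ) - 1) * ((ℓ : ℝ) - 1) := by
                      push_cast [Nat.cast_sub (by omega : 1 ≤ t),
                        Nat.cast_sub (by omega : 1 ≤ ℓ)]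
                      ring
              have h2 : ((indepNumOn G (closedNbhd G v ∩ ↑A) : ℕ) : ℝ) ≤
                  ((indepNumOn G (closedNbhd G v ∩ ↑B) : ℕ) : ℝ) +
                    ((D.card * (ℓ - 1) : ℕ) : ℝ) := by
                exact_mod_cast hcost
              linarith
            have hmaxA : max A.card 2 = A.card := max_eq_left (by omega)
            calc ((indepNumOn G (closedNbhd G v ∩ ↑A) : ℕ) : ℝ)
                ≤ ((indepNumOn G (closedNbhd G v ∩ ↑B) : ℕ) : ℝ) +
                    ((t : ℝ) - 1) * ((ℓ : ℝ) - 1) := hcast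
              _ ≤ ((t : ℝ) - 1) * ℓ * Real.logb 2 ((max B.card 2 : ℕ) : ℝ) +
                    ((t : ℝ) - 1) * ((ℓ : ℝ) - 1) := by linarith
              _ ≤ ((t : ℝ) - 1) * ℓ * Real.logb 2 (A.card : ℝ) :=
                  arith_lemma ht hℓ hBsz h5
              _ = _ := by rw [hmaxA]
        · -- disconnected case: recurse into the reachable part
          have hRss : R ⊂ A := Finset.ssubset_iff_subset_ne.mpr ⟨hRsub, hRA⟩
          have hRcard : R.card ≤ n := by
            have := Finset.card_lt_card hRss
            omega
          obtain ⟨v, hvR, hv⟩ := IH R hRcard ⟨a, haR⟩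
          refine ⟨v, hRsub hvR, ?_⟩
          have hEq : closedNbhd G v ∩ ↑A = closedNbhd G v ∩ ↑R := by
            ext x
            constructor
            · rintro ⟨hxc, hxA⟩
              refine ⟨hxc, ?_⟩
              rcases mem_closedNbhd.mp hxc with rfl | hadj'
              · exact hvR
              · have hreachv : Reach G A a v := (Finset.mem_filter.mp hvR).2
                exact Finset.mem_coe.mpr (Finset.mem_filter.mpr
                  ⟨Finset.mem_coe.mp hxA,
                    Reach.step hreachv hadj' (Finset.mem_coe.mp hxA)⟩)
            · rintro ⟨hxc, hxR⟩
              exact ⟨hxc, Finset.coe_subset.mpr hRsub hxR⟩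
          rw [hEq]
          exact hv.trans (f_mono ht hℓ (le_of_lt (Finset.card_lt_card hRss)))

end Aux

/-- For all integers `t ≥ 3` and `ℓ ≥ 2`, every `{P_t, K_{2,ℓ}}`-free graph
`G` with `n ≥ 2` vertices has a vertex `v` with `α(G[N_G[v]]) ≤ (t−1)ℓ·log₂ n`. -/
theorem stmt_6 (t ℓ : ℕ) (ht : 3 ≤ t) (hℓ : 2 ≤ ℓ)
    {V : Type} [Fintype V] (G : SimpleGraph V)
    (hP : InducedFree (pathGraph t) G)
    (hK : InducedFree (completeBipartiteGraph (Fin 2) (Fin ℓ)) G)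
    (hn : 2 ≤ Fintype.card V) :
    ∃ v : V, (indepNumOn G (closedNbhd G v) : ℝ) ≤
      ((t : ℝ) - 1) * ℓ * Real.logb 2 (Fintype.card V) := by
  have hne : Nonempty V := Fintype.card_pos_iff.mp (by omega)
  obtain ⟨v, _, hv⟩ := main_lemma ht hℓ hP hK (Fintype.card V) Finset.univ
    (le_of_eq (Finset.card_univ)) Finset.univ_nonempty
  refine ⟨v, ?_⟩
  have h1 : closedNbhd G v ∩ ↑(Finset.univ : Finset V) = closedNbhd G v := by simp
  have h2 : max (Finset.univ : Finset V).card 2 = Fintype.card V := by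
    rw [Finset.card_univ]
    exact max_eq_left hn
  rw [h1, h2] at hv
  exact hv
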